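/- (a) For every r_2 ∈ {0,1} with P(R_2 = r_2) > 0, P(R_1 = 1 | R_2 = r_2) = f_1(1; r_2). (b) For every x_1 ∈ 𝒳_1 with P(X_1 = x_1) > 0, P(R_2 = 1 | X_1 = x_1) = f_2(1; x_1) and f_2(1; x_1) = [P(X_1 = x_1, R_1 = 1, R_2 = 1) / f_1(1; 1)] / [Σ_{r_2 ∈ {0,1}} P(X_1 = x_1, R_1 = 1, R_2 = r_2) / f_1(1; r_2)]. Together with (a), the propensity score of R_2 is identified from the observed data law via the post-intervention margin obtained by fixing R_1 to one. -/
import Mathlib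


open Finset

/-- Two-variable model with `X₁ → R₂, R₂ → R₁` (causal irrelevancy):
(a) the propensity score of `R₁` given `R₂` equals `f₁`;
(b) the propensity score of `R₂` given `X₁` equals `f₂`, and `f₂` is identified
from the observed data law via the post-intervention margin fixing `R₁ = 1`. -/
theorem stmt_3
    (X1 X2 : Type) [Fintype X1] [Fintype X2] [Nonempty X1] [Nonempty X2]
    (q : X1 → X2 → ℝ) (hq0 : ∀ x1 x2, 0 ≤ q x1 x2)
    (hq1 : (∑ x1, ∑ x2, q x1 x2) = 1)
    (f2 : Bool → X1 → ℝ) (f1 : Bool → Bool → ℝ)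
    (hf20 : ∀ b x, 0 ≤ f2 b x) (hf2sum : ∀ x, f2 false x + f2 true x = 1)
    (hf10 : ∀ b r, 0 ≤ f1 b r) (hf1sum : ∀ r, f1 false r + f1 true r = 1)
    (hf1pos : ∀ r2 : Bool, 0 < f1 true r2)
    (p : X1 → X2 → Bool → Bool → ℝ)
    (hp : ∀ x1 x2 r1 r2, p x1 x2 r1 r2 = q x1 x2 * f2 r2 x1 * f1 r1 r2) :
    -- (a) P(R₁ = 1 | R₂ = r₂) = f₁(1; r₂)
    (∀ r2 : Bool,
      0 < (∑ x1, ∑ x2, ∑ r1, p x1 x2 r1 r2) →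
      (∑ x1, ∑ x2, p x1 x2 true r2) / (∑ x1, ∑ x2, ∑ r1, p x1 x2 r1 r2) = f1 true r2)
    ∧
    -- (b) P(R₂ = 1 | X₁ = x₁) = f₂(1; x₁), identified by fixing R₁ to one
    (∀ x1 : X1,
      0 < (∑ x2, ∑ r1, ∑ r2, p x1 x2 r1 r2) →
      ((∑ x2, ∑ r1, p x1 x2 r1 true) / (∑ x2, ∑ r1, ∑ r2, p x1 x2 r1 r2) = f2 true x1
        ∧ f2 true x1
            = ((∑ x2, p x1 x2 true true) / f1 true true)
              / (∑ r2 : Bool, (∑ x2, p x1 x2 true r2) / f1 true r2))) := by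
  constructor
  · intro r2 hpos
    have hd : (∑ x1, ∑ x2, ∑ r1, p x1 x2 r1 r2)
        = (∑ x1, ∑ x2, q x1 x2 * f2 r2 x1) := by
      refine Finset.sum_congr rfl fun x1 _ => Finset.sum_congr rfl fun x2 _ => ?_
      simp only [hp, Fintype.sum_bool]
      linear_combination q x1 x2 * f2 r2 x1 * hf1sum r2
    have hn : (∑ x1, ∑ x2, p x1 x2 true r2)
        = f1 true r2 * (∑ x1, ∑ x2, q x1 x2 * f2 r2 x1) := by
      rw [Finset.mul_sum]
      refine Finset.sum_congr rfl fun x1 _ => ?_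
      rw [Finset.mul_sum]
      refine Finset.sum_congr rfl fun x2 _ => ?_
      rw [hp]; ring
    rw [hd] at hpos ⊢
    rw [hn, mul_div_assoc, div_self (ne_of_gt hpos), mul_one]
  · intro x1 hpos
    set Q := ∑ x2, q x1 x2 with hQ
    have hd : (∑ x2, ∑ r1, ∑ r2, p x1 x2 r1 r2) = Q := by
      rw [hQ]
      refine Finset.sum_congr rfl fun x2 _ => ?_
      simp only [hp, Fintype.sum_bool]
      linear_combination q x1 x2 * f2 true x1 * hf1sum true
        + q x1 x2 * f2 false x1 * hf1sum false + q x1 x2 * hf2sum x1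
    have hn : (∑ x2, ∑ r1, p x1 x2 r1 true) = Q * f2 true x1 := by
      rw [hQ, Finset.sum_mul]
      refine Finset.sum_congr rfl fun x2 _ => ?_
      simp only [hp, Fintype.sum_bool]
      linear_combination q x1 x2 * f2 true x1 * hf1sum true
    rw [hd] at hpos ⊢
    have hQne : Q ≠ 0 := ne_of_gt hpos
    have hs : ∀ r2, (∑ x2, p x1 x2 true r2) = Q * f2 r2 x1 * f1 true r2 := by
      intro r2
      rw [hQ, Finset.sum_mul, Finset.sum_mul]
      refine Finset.sum_congr rfl fun x2 _ => ?_
      rw [hp]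
    constructor
    · rw [hn]; field_simp
    · rw [Fintype.sum_bool, hs true, hs false,
        mul_div_assoc _ _ (f1 true true), div_self (ne_of_gt (hf1pos true)),
        mul_div_assoc _ _ (f1 true false), div_self (ne_of_gt (hf1pos false)), mul_one, mul_one]
      rw [← mul_add]
      have : f2 true x1 + f2 false x1 = 1 := by linarith [hf2sum x1]
      rw [this, mul_one]; field_simp
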